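/- Let ℓ² be the Hilbert space of square-summable complex sequences indexed by the integers k ≥ 1. Define the bounded operator H on ℓ² by (Hx)₁ = 0 and (Hx)_k = e^{−k} x_k for k ≥ 2, let a ∈ ℓ² be given by a₁ = 1, a_k = √(3/4ⁿ) if k = (4n)² for some integer n ≥ 1, and a_k = 0 otherwise, and let K_a x = ⟨x, a⟩ a. Then for every t ∈ (0, 1) there is exactly one λ < 0 that is an eigenvalue of H − tK_a; this λ satisfies t · ( 1/(−λ) + Σ_{k=2}^∞ a_k²/(e^{−k} − λ) ) = 1, and its eigenspace ker(H − tK_a − λ) is one-dimensional. -/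

import Mathlib

open Filter Topology
open scoped InnerProductSpace Classical

noncomputable section

/-- The sequence `a`: `a₁ = 1`, `a_k = √(3/4ⁿ)` when `k = (4n)²` for some `n ≥ 1`,
and `a_k = 0` otherwise.  (When `k = (4n)²` one has `n = √k / 4`.) -/
def aSeq (k : ℕ+) : ℝ :=
  if (k : ℕ) = 1 then 1
  else if ∃ n : ℕ, 1 ≤ n ∧ (k : ℕ) = (4 * n) ^ 2 then
    Real.sqrt (3 / 4 ^ (Nat.sqrt (k : ℕ) / 4))
  else 0

namespace NegEV

def d (k : ℕ+) : ℝ := if (k : ℕ) = 1 then 0 else Real.exp (-((k : ℕ) : ℝ))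

lemma d_nonneg (k : ℕ+) : 0 ≤ d k := by
  unfold d; split_ifs; exacts [le_rfl, (Real.exp_pos _).le]

lemma d_one : d 1 = 0 := by simp [d]

lemma aSeq_nonneg (k : ℕ+) : 0 ≤ aSeq k := by
  unfold aSeq; split_ifs
  exacts [zero_le_one, Real.sqrt_nonneg _, le_rfl]

lemma aSeq_one : aSeq 1 = 1 := by simp [aSeq]

lemma denom_pos {lam : ℝ} (h : lam < 0) (k : ℕ+) : 0 < d k - lam := by
  have := d_nonneg k; linarith

def F (lam : ℝ) : ℝ := ∑' k : ℕ+, aSeq k ^ 2 / (d k - lam)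

lemma summable_F (hS : Summable fun k : ℕ+ => aSeq k ^ 2) {lam : ℝ} (h : lam < 0) :
    Summable fun k : ℕ+ => aSeq k ^ 2 / (d k - lam) := by
  refine Summable.of_nonneg_of_le
    (fun k => div_nonneg (sq_nonneg _) (denom_pos h k).le)
    (fun k => ?_) (hS.div_const (-lam))
  exact div_le_div_of_nonneg_left (sq_nonneg _) (by linarith) (by have := d_nonneg k; linarith)

lemma F_strictMonoOn (hS : Summable fun k : ℕ+ => aSeq k ^ 2) :
    StrictMonoOn F (Set.Iio 0) := by
  intro x hx y hy hxy
  simp only [Set.mem_Iio] at hx hy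
  refine Summable.tsum_lt_tsum (i := 1) (fun k => ?_) ?_ (summable_F hS hx) (summable_F hS hy)
  · exact div_le_div_of_nonneg_left (sq_nonneg _) (denom_pos hy k) (by linarith)
  · rw [aSeq_one, d_one, one_pow]
    rw [div_lt_div_iff₀ (by linarith) (by linarith)]
    linarith

lemma F_continuousOn (hS : Summable fun k : ℕ+ => aSeq k ^ 2) {b : ℝ} (hb : b < 0) :
    ContinuousOn F (Set.Iic b) := by
  have tu : TendstoUniformlyOn
      (fun (s : Finset ℕ+) (lam : ℝ) => ∑ k ∈ s, aSeq k ^ 2 / (d k - lam))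
      (fun lam => ∑' k : ℕ+, aSeq k ^ 2 / (d k - lam)) atTop (Set.Iic b) := by
    refine tendstoUniformlyOn_tsum (hS.div_const (-b)) (fun k lam hlam => ?_)
    rw [Set.mem_Iic] at hlam
    have h1 : 0 < d k - lam := by have := d_nonneg k; linarith
    rw [Real.norm_eq_abs, abs_of_nonneg (div_nonneg (sq_nonneg _) h1.le)]
    exact div_le_div_of_nonneg_left (sq_nonneg _) (by linarith) (by have := d_nonneg k; linarith)
  refine tu.continuousOn (Filter.Eventually.of_forall fun s => ?_).frequently
  refine continuousOn_finset_sum s (fun k _ => ContinuousOn.div continuousOn_const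
    ((continuous_const.sub continuous_id).continuousOn) (fun x hx => ?_))
  rw [Set.mem_Iic] at hx
  have := d_nonneg k; intro h0; linarith [sub_eq_zero.mp h0]

lemma one_div_le_F (hS : Summable fun k : ℕ+ => aSeq k ^ 2) {lam : ℝ} (h : lam < 0) :
    1 / (-lam) ≤ F lam := by
  have := Summable.le_tsum (summable_F hS h) 1
    (fun k _ => div_nonneg (sq_nonneg _) (denom_pos h k).le)
  simpa [aSeq_one, d_one, F] using this

lemma F_le (hS : Summable fun k : ℕ+ => aSeq k ^ 2) {lam : ℝ} (h : lam < 0) :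
    F lam ≤ (∑' k : ℕ+, aSeq k ^ 2) / (-lam) := by
  unfold F
  rw [← tsum_div_const]
  exact Summable.tsum_le_tsum (fun k => div_le_div_of_nonneg_left (sq_nonneg _) (by linarith)
    (by have := d_nonneg k; linarith)) (summable_F hS h) (hS.div_const _)

lemma ite_d (k : ℕ+) (z : ℂ) :
    (if (k : ℕ) = 1 then (0 : ℂ) else (Real.exp (-((k : ℕ) : ℝ)) : ℂ) * z)
      = (d k : ℂ) * z := by
  unfold d; split_ifs <;> push_cast <;> ring

end NegEV

open NegEV

set_option maxHeartbeats 1000000 in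
/-- for every `0 < t < 1` the operator `H - t K_a` on `ℓ²` (where `H` is the
diagonal operator `(Hx)₁ = 0`, `(Hx)_k = e^{-k} x_k` for `k ≥ 2`, `a` is the vector with
coordinates `aSeq`, and `K_a x = ⟨x, a⟩ a`) has exactly one negative eigenvalue `λ`; this `λ`
satisfies `t (1/(-λ) + Σ_{k≥2} a_k²/(e^{-k} - λ)) = 1` and its eigenspace is
one-dimensional. -/
theorem unique_negative_eigenvalue
    (av : lp (fun _ : ℕ+ => ℂ) 2) (hav : ∀ k : ℕ+, av k = (aSeq k : ℂ))
    (T : lp (fun _ : ℕ+ => ℂ) 2 →L[ℂ] lp (fun _ : ℕ+ => ℂ) 2)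
    (hT : ∀ (x : lp (fun _ : ℕ+ => ℂ) 2) (k : ℕ+),
      T x k = if (k : ℕ) = 1 then 0 else (Real.exp (-((k : ℕ) : ℝ)) : ℂ) * x k) :
    ∀ t ∈ Set.Ioo (0 : ℝ) 1,
      ∃ lam : ℝ, lam < 0 ∧
        (∃ x, x ≠ 0 ∧
          (T - (t : ℂ) • (innerSL ℂ av).smulRight av) x = (lam : ℂ) • x) ∧
        (∀ lam' : ℝ, lam' < 0 →
          (∃ x, x ≠ 0 ∧
            (T - (t : ℂ) • (innerSL ℂ av).smulRight av) x = (lam' : ℂ) • x) →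
          lam' = lam) ∧
        t * (1 / (-lam) +
            ∑' k : ℕ+, (if (k : ℕ) = 1 then 0
              else aSeq k ^ 2 / (Real.exp (-((k : ℕ) : ℝ)) - lam))) = 1 ∧
        Module.finrank ℂ
          (LinearMap.ker ((T - (t : ℂ) • (innerSL ℂ av).smulRight av -
            (lam : ℂ) • (1 : lp (fun _ : ℕ+ => ℂ) 2 →L[ℂ] lp (fun _ : ℕ+ => ℂ) 2) :
              lp (fun _ : ℕ+ => ℂ) 2 →L[ℂ] lp (fun _ : ℕ+ => ℂ) 2) :
              lp (fun _ : ℕ+ => ℂ) 2 →ₗ[ℂ] lp (fun _ : ℕ+ => ℂ) 2)) = 1 := by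
  intro t ht
  obtain ⟨ht0, ht1⟩ := ht
  -- summability of `aSeq ^ 2`
  have hS : Summable fun k : ℕ+ => aSeq k ^ 2 := by
    refine ((lp.memℓp av).summable (by norm_num)).congr fun k => ?_
    rw [hav k]
    have h2 : ((2 : ENNReal)).toReal = (2 : ℝ) := by norm_num
    rw [h2, Complex.norm_real, Real.norm_eq_abs,
      show (2:ℝ) = ((2:ℕ):ℝ) from by norm_num, Real.rpow_natCast]
    exact sq_abs _
  -- the coordinate extraction lemma
  have coord : ∀ (mu : ℝ), mu < 0 → ∀ y : lp (fun _ : ℕ+ => ℂ) 2,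
      (T - (t : ℂ) • (innerSL ℂ av).smulRight av) y = (mu : ℂ) • y →
      ∀ k : ℕ+, y k = ((t : ℂ) * ⟪av, y⟫_ℂ) * ((aSeq k / (d k - mu) : ℝ) : ℂ) := by
    intro mu hmu y hy k
    have h1 : ((T - (t : ℂ) • (innerSL ℂ av).smulRight av) y) k
        = (((mu : ℂ) • y) : lp (fun _ : ℕ+ => ℂ) 2) k := by rw [hy]
    simp only [ContinuousLinearMap.sub_apply, ContinuousLinearMap.smul_apply,
      ContinuousLinearMap.smulRight_apply, innerSL_apply_apply, lp.coeFn_sub, Pi.sub_apply,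
      lp.coeFn_smul, Pi.smul_apply, smul_eq_mul, hT, hav] at h1
    rw [ite_d] at h1
    have hne : ((d k - mu : ℝ) : ℂ) ≠ 0 := by exact_mod_cast (denom_pos hmu k).ne'
    have h2 : ((d k - mu : ℝ) : ℂ) * y k = (t : ℂ) * ⟪av, y⟫_ℂ * (aSeq k : ℂ) := by
      push_cast at h1 ⊢
      linear_combination h1
    rw [Complex.ofReal_div, mul_div_assoc', eq_div_iff hne]
    linear_combination h2
  -- inner products of eigen-shaped vectors
  have inner_shape : ∀ (mu : ℝ), mu < 0 → ∀ (y : lp (fun _ : ℕ+ => ℂ) 2) (c : ℂ),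
      (∀ k : ℕ+, y k = c * ((aSeq k / (d k - mu) : ℝ) : ℂ)) →
      ⟪av, y⟫_ℂ = c * ((F mu : ℝ) : ℂ) := by
    intro mu hmu y c hyk
    rw [lp.inner_eq_tsum]
    have hterm : ∀ k : ℕ+, ⟪av k, y k⟫_ℂ = c * ((aSeq k ^ 2 / (d k - mu) : ℝ) : ℂ) := by
      intro k
      rw [RCLike.inner_apply, hav, hyk, Complex.conj_ofReal]
      push_cast
      ring
    rw [tsum_congr hterm, tsum_mul_left, ← Complex.ofReal_tsum]
    rfl
  -- any negative eigenvalue satisfies the characteristic equation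
  have eig_eq : ∀ (mu : ℝ), mu < 0 →
      (∃ x, x ≠ 0 ∧ (T - (t : ℂ) • (innerSL ℂ av).smulRight av) x = (mu : ℂ) • x) →
      t * F mu = 1 := by
    rintro mu hmu ⟨y, hy0, hy⟩
    have hyk := coord mu hmu y hy
    have hinner := inner_shape mu hmu y _ hyk
    have hc : ⟪av, y⟫_ℂ ≠ 0 := by
      intro h0
      apply hy0
      apply lp.ext; funext k
      have := hyk k
      rw [h0] at this
      simpa using this
    have h1 : (1 : ℂ) = (t : ℂ) * ((F mu : ℝ) : ℂ) :=
      mul_left_cancel₀ hc (by linear_combination hinner)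
    exact_mod_cast h1.symm
  -- find the eigenvalue via the intermediate value theorem
  set S := ∑' k : ℕ+, aSeq k ^ 2 with hSdef
  have hS1 : (1 : ℝ) ≤ S := by
    have := Summable.le_tsum hS 1 (fun k _ => sq_nonneg _)
    simpa [aSeq_one] using this
  set b : ℝ := -(t / 2) with hbdef
  set a0 : ℝ := -(S * t + t) with ha0def
  have hb : b < 0 := by rw [hbdef]; linarith
  have ha0 : a0 < 0 := by rw [ha0def]; nlinarith
  have hab : a0 ≤ b := by rw [ha0def, hbdef]; nlinarith
  have hFb : 1 / t < F b := by
    have h1 : 1 / (-b) ≤ F b := one_div_le_F hS hb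
    have h2 : 1 / t < 1 / (-b) := by
      rw [hbdef, neg_neg, div_lt_div_iff₀ ht0 (by linarith)]
      linarith
    linarith
  have hFa : F a0 < 1 / t := by
    have h1 : F a0 ≤ S / (-a0) := F_le hS ha0
    have h2 : S / (-a0) < 1 / t := by
      rw [ha0def, neg_neg, div_lt_div_iff₀ (by nlinarith) ht0]
      nlinarith
    linarith
  have hcont : ContinuousOn F (Set.Icc a0 b) :=
    (F_continuousOn hS hb).mono Set.Icc_subset_Iic_self
  obtain ⟨lam, hlamIcc, hFlam⟩ := intermediate_value_Icc hab hcont ⟨hFa.le, hFb.le⟩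
  have hlam : lam < 0 := lt_of_le_of_lt hlamIcc.2 hb
  have htF : t * F lam = 1 := by rw [hFlam]; field_simp
  -- the eigenvector
  have hxmem : Memℓp (fun k : ℕ+ => ((aSeq k / (d k - lam) : ℝ) : ℂ)) 2 := by
    apply memℓp_gen
    have h2 : ((2 : ENNReal)).toReal = (2 : ℝ) := by norm_num
    refine Summable.of_nonneg_of_le (fun k => Real.rpow_nonneg (norm_nonneg _) _)
      (fun k => ?_) (hS.div_const (lam ^ 2))
    have hpos := denom_pos hlam k
    rw [h2, Complex.norm_real, Real.norm_eq_abs,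
      abs_of_nonneg (div_nonneg (aSeq_nonneg k) hpos.le),
      show (2:ℝ) = ((2:ℕ):ℝ) from by norm_num, Real.rpow_natCast, div_pow]
    refine div_le_div_of_nonneg_left (sq_nonneg _) (by have : lam ≠ 0 := ne_of_lt hlam; positivity) ?_
    have h3 : -lam ≤ d k - lam := by have := d_nonneg k; linarith
    calc lam ^ 2 = (-lam) ^ 2 := by ring
    _ ≤ (d k - lam) ^ 2 := by nlinarith
  set xv : lp (fun _ : ℕ+ => ℂ) 2 := ⟨fun k => ((aSeq k / (d k - lam) : ℝ) : ℂ), hxmem⟩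
    with hxvdef
  have hxvk : ∀ k : ℕ+, xv k = ((aSeq k / (d k - lam) : ℝ) : ℂ) := fun k => rfl
  have hxv0 : xv ≠ 0 := by
    intro h
    have h1 : xv 1 = 0 := by rw [h]; simp [lp.coeFn_zero]
    rw [hxvk 1] at h1
    have h2 : (aSeq 1 / (d 1 - lam) : ℝ) = 0 := Complex.ofReal_eq_zero.mp h1
    rw [aSeq_one, d_one, zero_sub] at h2
    exact absurd h2 (one_div_ne_zero (by linarith))
  have hxinner : ⟪av, xv⟫_ℂ = ((F lam : ℝ) : ℂ) := by
    have := inner_shape lam hlam xv 1 (fun k => by rw [one_mul])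
    simpa using this
  have heig : (T - (t : ℂ) • (innerSL ℂ av).smulRight av) xv = (lam : ℂ) • xv := by
    apply lp.ext; funext k
    simp only [ContinuousLinearMap.sub_apply, ContinuousLinearMap.smul_apply,
      ContinuousLinearMap.smulRight_apply, innerSL_apply_apply, lp.coeFn_sub, Pi.sub_apply,
      lp.coeFn_smul, Pi.smul_apply, smul_eq_mul, hT, hav, hxinner]
    rw [ite_d]
    have hne : ((d k - lam : ℝ) : ℂ) ≠ 0 := by exact_mod_cast (denom_pos hlam k).ne'
    have h2C : (t : ℂ) * ((F lam : ℝ) : ℂ) = 1 := by exact_mod_cast htF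
    have hx : ((d k - lam : ℝ) : ℂ) * ((aSeq k / (d k - lam) : ℝ) : ℂ) = (aSeq k : ℂ) := by
      rw [Complex.ofReal_div, mul_div_cancel₀ _ hne]
    push_cast at hx h2C ⊢
    rw [hxvk k]; push_cast
    linear_combination hx - (aSeq k : ℂ) * h2C
  refine ⟨lam, hlam, ⟨xv, hxv0, heig⟩, ?_, ?_, ?_⟩
  · -- uniqueness
    intro lam' hlam' hex
    have h1 := eig_eq lam' hlam' hex
    have h2 : F lam' = F lam := mul_left_cancel₀ (ne_of_gt ht0) (by rw [h1, htF])
    exact (F_strictMonoOn hS).injOn (Set.mem_Iio.mpr hlam') (Set.mem_Iio.mpr hlam) h2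
  · -- the characteristic equation in the stated form
    have hF : F lam = 1 / (-lam) + ∑' k : ℕ+, (if (k : ℕ) = 1 then 0
        else aSeq k ^ 2 / (Real.exp (-((k : ℕ) : ℝ)) - lam)) := by
      unfold F
      rw [Summable.tsum_eq_add_tsum_ite (summable_F hS hlam) 1]
      congr 1
      · rw [aSeq_one, d_one, one_pow, zero_sub]
      · refine tsum_congr fun k => ?_
        by_cases hk : k = 1
        · subst hk; simp
        · have hk' : ((k : ℕ) ≠ 1) := by simpa [PNat.coe_eq_one_iff] using hk
          rw [if_neg hk, if_neg hk']
          unfold d; rw [if_neg hk']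
    rw [← hF]; exact htF
  · -- one-dimensional eigenspace
    have hker : LinearMap.ker ((T - (t : ℂ) • (innerSL ℂ av).smulRight av -
        (lam : ℂ) • (1 : lp (fun _ : ℕ+ => ℂ) 2 →L[ℂ] lp (fun _ : ℕ+ => ℂ) 2) :
          lp (fun _ : ℕ+ => ℂ) 2 →L[ℂ] lp (fun _ : ℕ+ => ℂ) 2) :
          lp (fun _ : ℕ+ => ℂ) 2 →ₗ[ℂ] lp (fun _ : ℕ+ => ℂ) 2)
        = Submodule.span ℂ {xv} := by
      apply le_antisymm
      · intro y hy
        rw [LinearMap.mem_ker, ContinuousLinearMap.coe_coe] at hy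
        have hy' : (T - (t : ℂ) • (innerSL ℂ av).smulRight av) y = (lam : ℂ) • y := by
          have h3 : (T - (t : ℂ) • (innerSL ℂ av).smulRight av -
              (lam : ℂ) • (1 : lp (fun _ : ℕ+ => ℂ) 2 →L[ℂ] lp (fun _ : ℕ+ => ℂ) 2)) y
              = (T - (t : ℂ) • (innerSL ℂ av).smulRight av) y - (lam : ℂ) • y := by
            rw [ContinuousLinearMap.sub_apply, ContinuousLinearMap.smul_apply,
              ContinuousLinearMap.one_apply]
          rw [h3] at hy
          rwa [sub_eq_zero] at hy
        have hyk := coord lam hlam y hy'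
        refine Submodule.mem_span_singleton.mpr ⟨(t : ℂ) * ⟪av, y⟫_ℂ, ?_⟩
        apply lp.ext; funext k
        rw [lp.coeFn_smul, Pi.smul_apply, smul_eq_mul, hxvk k, ← hyk k]
      · rw [Submodule.span_singleton_le_iff_mem, LinearMap.mem_ker, ContinuousLinearMap.coe_coe,
          ContinuousLinearMap.sub_apply, heig, ContinuousLinearMap.smul_apply,
          ContinuousLinearMap.one_apply]
        simp
    rw [hker]
    exact finrank_span_singleton hxv0
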